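/- arXiv:0812.4113 — 2 statements merged into one kernel-verified Lean document; each statement's English description precedes it below -/
import Mathlib

section
/- Let 1 < j < m ≤ n and set x_j^{(m)} = (ω−1)/2 + Σ_{r=1}^{j−1}(s_{rm} − e_{rm}) ∈ B_n(ω). Then s_{jm} x_j^{(m)} = x_j s_{jm}, where x_j = (ω−1)/2 + Σ_{r=1}^{j−1}(s_{rj} − e_{rj}) is the Jucys–Murphy element. -/
/-!
Common definitions for the fusion procedure for the Brauer algebra
(Isaev–Molev, "Fusion procedure for the Brauer algebra").
-/

noncomputable section
open scoped BigOperators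
open Classical

namespace BrauerFusion

/-- The base field `F = ℂ(ω)`. -/
abbrev F : Type := RatFunc ℂ

/-- The indeterminate `ω ∈ ℂ(ω)`. -/
def ωF : F := RatFunc.X

/-- `s e : ℕ → A` satisfy the defining relations of the Brauer algebra `B_n(ω)`
over the commutative base `R`; here `s i`, `e i` represent the generators
`s_i`, `e_i` for `1 ≤ i ≤ n - 1` (values at other indices are irrelevant). -/
structure IsBrauer {R : Type*} {A : Type*} [CommRing R] [Ring A] [Algebra R A]
    (n : ℕ) (ω : R) (s e : ℕ → A) : Prop where
  ss : ∀ i, 1 ≤ i → i + 1 ≤ n → s i * s i = 1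
  ee : ∀ i, 1 ≤ i → i + 1 ≤ n → e i * e i = ω • e i
  se : ∀ i, 1 ≤ i → i + 1 ≤ n → s i * e i = e i
  es : ∀ i, 1 ≤ i → i + 1 ≤ n → e i * s i = e i
  ss_comm : ∀ i j, 1 ≤ i → j + 1 ≤ n → i + 1 < j → s i * s j = s j * s i
  ee_comm : ∀ i j, 1 ≤ i → j + 1 ≤ n → i + 1 < j → e i * e j = e j * e i
  se_comm : ∀ i j, 1 ≤ i → j + 1 ≤ n → i + 1 < j → s i * e j = e j * s i
  es_comm : ∀ i j, 1 ≤ i → j + 1 ≤ n → i + 1 < j → s j * e i = e i * s j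
  braid : ∀ i, 1 ≤ i → i + 2 ≤ n → s i * s (i+1) * s i = s (i+1) * s i * s (i+1)
  eee₁ : ∀ i, 1 ≤ i → i + 2 ≤ n → e i * e (i+1) * e i = e i
  eee₂ : ∀ i, 1 ≤ i → i + 2 ≤ n → e (i+1) * e i * e (i+1) = e (i+1)
  see : ∀ i, 1 ≤ i → i + 2 ≤ n → s i * e (i+1) * e i = s (i+1) * e i
  ees : ∀ i, 1 ≤ i → i + 2 ≤ n → e (i+1) * e i * s (i+1) = e (i+1) * s i

variable {A : Type*} [Ring A]

/-- The transposition `s_{ij} = s_i s_{i+1} ⋯ s_{j-2} s_{j-1} s_{j-2} ⋯ s_{i+1} s_i`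
(for `i < j`), defined by `s_{i,i+1} = s_i` and `s_{ij} = s_i s_{i+1,j} s_i`. -/
def sij (s : ℕ → A) (i j : ℕ) : A :=
  if h : i + 1 < j then s i * sij s (i+1) j * s i else s i
termination_by j - i
decreasing_by omega

/-- The element `e_{ij} = s_{i,j-1} e_{j-1} s_{i,j-1}` (for `i < j`), with `e_{i,i+1} = e_i`. -/
def eij (s e : ℕ → A) (i j : ℕ) : A :=
  if i + 1 < j then sij s i (j-1) * e (j-1) * sij s i (j-1) else e i

/-- `x_j^{(m)} = (ω-1)/2 + ∑_{r=1}^{j-1} (s_{rm} - e_{rm})`. -/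
def jmM {R : Type*} [Field R] [Algebra R A] (ω : R) (s e : ℕ → A) (j m : ℕ) : A :=
  algebraMap R A ((ω - 1) / 2) + ∑ r ∈ Finset.Icc 1 (j-1), (sij s r m - eij s e r m)

/-- The Jucys–Murphy element `x_r = (ω-1)/2 + ∑_{k=1}^{r-1} (s_{kr} - e_{kr})`. -/
def jm {R : Type*} [Field R] [Algebra R A] (ω : R) (s e : ℕ → A) (r : ℕ) : A :=
  jmM ω s e r r

/-- The pairs `(i, j)` with `1 ≤ i < j ≤ n` in lexicographic order. -/
def lexPairs (n : ℕ) : List (ℕ × ℕ) :=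
  (List.range' 1 n).flatMap fun i =>
    ((List.range' 1 n).filter fun j => decide (i < j)).map fun j => (i, j)

/-- The rational function
`Ψ(u_1,…,u_n) = ∏_{1≤i<j≤n} (1 - e_{ij}/(u_i+u_j)) ∏_{1≤i<j≤n} (1 - s_{ij}/(u_i-u_j))`,
with ordered products over the pairs `(i,j)` in lexicographic order. -/
def Psi {K : Type*} [Field K] [Algebra K A] (s e : ℕ → A) (n : ℕ) (u : ℕ → K) : A :=
  ((lexPairs n).map fun p => 1 - (u p.1 + u p.2)⁻¹ • eij s e p.1 p.2).prod *
  ((lexPairs n).map fun p => 1 - (u p.1 - u p.2)⁻¹ • sij s p.1 p.2).prod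

/-- An updown tableau of length `n`: a sequence of Young diagrams
`Λ_0 = ∅, Λ_1, …, Λ_n` in which `Λ_r` is obtained from `Λ_{r-1}` by adding
(`add r = true`) or removing (`add r = false`) the box `box r`. -/
structure UpDownTableau (n : ℕ) where
  shape : ℕ → YoungDiagram
  box : ℕ → ℕ × ℕ
  add : ℕ → Bool
  shape_zero : shape 0 = ⊥
  step_add : ∀ r, 1 ≤ r → r ≤ n → add r = true →
    box r ∉ shape (r-1) ∧ (shape r).cells = insert (box r) (shape (r-1)).cells
  step_rem : ∀ r, 1 ≤ r → r ≤ n → add r = false →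
    box r ∉ shape r ∧ (shape (r-1)).cells = insert (box r) (shape r).cells

/-- The content `c_r` of an updown tableau: `(ω-1)/2 + j - i` if the box `(i,j)` was
added at step `r`, and `-((ω-1)/2 + j - i)` if it was removed. -/
def content {R : Type*} [Field R] (ω : R) {n : ℕ} (T : UpDownTableau n) (r : ℕ) : R :=
  if T.add r then (ω - 1) / 2 + ((T.box r).2 : R) - ((T.box r).1 : R)
  else -((ω - 1) / 2 + ((T.box r).2 : R) - ((T.box r).1 : R))

/-- The content attached to a box `b` which can be removed from (`b ∈ μ`) or
added to (`b ∉ μ`) the diagram `μ`. -/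
def boxContent {R : Type*} [Field R] (ω : R) (μ : YoungDiagram) (b : ℕ × ℕ) : R :=
  if b ∈ μ then -((ω - 1) / 2 + (b.2 : R) - (b.1 : R))
  else (ω - 1) / 2 + (b.2 : R) - (b.1 : R)

/-- All boxes `(i,j)` with `i, j < N`, listed in lexicographic order. -/
def gridList (N : ℕ) : List (ℕ × ℕ) :=
  (List.range N).flatMap fun i => (List.range N).map fun j => (i, j)

/-- A box which can be added to, or removed from, the Young diagram `μ`
so that the result is again a Young diagram. -/
def isCandidate (μ : YoungDiagram) (b : ℕ × ℕ) : Prop :=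
  (b ∉ μ ∧ ∃ ν : YoungDiagram, ν.cells = insert b μ.cells) ∨
  (b ∈ μ ∧ ∃ ν : YoungDiagram, μ.cells = insert b ν.cells)

/-- The list of all boxes which can be added to or removed from `μ`. -/
def candList (μ : YoungDiagram) : List (ℕ × ℕ) :=
  (gridList (μ.card + 2)).filter fun b => decide (isCandidate μ b)

/-- The primitive idempotent `E_{(Λ_1,…,Λ_r)}`, defined recursively by `E = 1` for `r = 0`
and `E_T = E_U ∏_a (x_r - a)/(c_r - a)`, the product over the contents `a` of all boxes
(other than the box of step `r`) which can be added to or removed from `Λ_{r-1}`. -/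
def idem {R : Type*} [Field R] [Algebra R A] (ω : R) (s e : ℕ → A) {n : ℕ}
    (T : UpDownTableau n) : ℕ → A
  | 0 => 1
  | r + 1 =>
    idem ω s e T r *
      (((candList (T.shape r)).filter (fun b => decide (b ≠ T.box (r+1)))).map fun b =>
        (content ω T (r+1) - boxContent ω (T.shape r) b)⁻¹ •
          (jm ω s e (r+1) - algebraMap R A (boxContent ω (T.shape r) b))).prod

/-- `d_k` : the number of steps among the first `len` steps of `T` adding a box
on the diagonal `k`. -/
def dAdd {n : ℕ} (T : UpDownTableau n) (len : ℕ) (k : ℤ) : ℤ :=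
  (((Finset.Icc 1 len).filter fun t =>
    T.add t = true ∧ ((T.box t).2 : ℤ) - ((T.box t).1 : ℤ) = k).card : ℤ)

/-- `d'_k` : the number of steps among the first `len` steps of `T` removing a box
on the diagonal `k`. -/
def dRem {n : ℕ} (T : UpDownTableau n) (len : ℕ) (k : ℤ) : ℤ :=
  (((Finset.Icc 1 len).filter fun t =>
    T.add t = false ∧ ((T.box t).2 : ℤ) - ((T.box t).1 : ℤ) = k).card : ℤ)

/-- `g_k = δ_{k0} + d_{k-1} + d_{k+1} - 2 d_k`. -/
def gAdd {n : ℕ} (T : UpDownTableau n) (len : ℕ) (k : ℤ) : ℤ :=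
  (if k = 0 then 1 else 0) + dAdd T len (k-1) + dAdd T len (k+1) - 2 * dAdd T len k

/-- `g'_k = d'_{k-1} + d'_{k+1} - 2 d'_k`. -/
def gRem {n : ℕ} (T : UpDownTableau n) (len : ℕ) (k : ℤ) : ℤ :=
  dRem T len (k-1) + dRem T len (k+1) - 2 * dRem T len k

/-- The diagonal `j - i` of the box of step `r`. -/
def diagOf {n : ℕ} (T : UpDownTableau n) (r : ℕ) : ℤ :=
  ((T.box r).2 : ℤ) - ((T.box r).1 : ℤ)

/-- The exponent `p_r` of an updown tableau: `p_r = 1 - g_{k_r}` if a box is added on the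
diagonal `k_r` at step `r`, and `p_r = 1 - g'_{k_r}` if a box is removed, where `g, g'`
are computed from the first `r - 1` steps. -/
def pExp {n : ℕ} (T : UpDownTableau n) (r : ℕ) : ℤ :=
  1 - (if T.add r then gAdd T (r-1) (diagOf T r) else gRem T (r-1) (diagOf T r))

/-- The factor `φ(U, T)` in the recursive definition of `f(T)`; the products over all
integers `k` are realized as products over `-r-1 ≤ k ≤ r+1`, which contains the support
of `g` and `g'` (all other factors are equal to 1). -/
def phiStep {n : ℕ} (T : UpDownTableau n) (r : ℕ) : F :=
  if T.add r then
    (∏ k ∈ (Finset.Icc (-(r:ℤ)-1) ((r:ℤ)+1)).erase (diagOf T r),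
      ((diagOf T r - k : ℤ) : F) ^ gAdd T (r-1) k) *
    ∏ k ∈ Finset.Icc (-(r:ℤ)-1) ((r:ℤ)+1),
      (((diagOf T r + k : ℤ) : F) + ωF - 1) ^ gRem T (r-1) k
  else
    (∏ k ∈ (Finset.Icc (-(r:ℤ)-1) ((r:ℤ)+1)).erase (diagOf T r),
      ((k - diagOf T r : ℤ) : F) ^ gRem T (r-1) k) *
    ∏ k ∈ Finset.Icc (-(r:ℤ)-1) ((r:ℤ)+1),
      ((1 : F) - ωF - ((diagOf T r + k : ℤ) : F)) ^ gAdd T (r-1) k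

/-- The scalar `f(T) ∈ ℂ(ω)`, defined recursively by `f(∅) = 1`, `f(T) = f(U) φ(U,T)`. -/
def fT {n : ℕ} (T : UpDownTableau n) : ℕ → F
  | 0 => 1
  | r + 1 => fT T r * phiStep T (r+1)

/-- The hook length of the box `b` in the Young diagram `μ`. -/
def hookLength (μ : YoungDiagram) (b : ℕ × ℕ) : ℕ :=
  (μ.cells.filter fun c => c.1 = b.1 ∧ b.2 < c.2).card +
  (μ.cells.filter fun c => c.2 = b.2 ∧ b.1 < c.1).card + 1

/-- The product of the hook lengths of all boxes of `μ`. -/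
def hookProd (μ : YoungDiagram) : ℕ :=
  ∏ b ∈ μ.cells, hookLength μ b

/-- Polynomials in the variables `u_1, u_2, …` over `F = ℂ(ω)`. -/
abbrev MvP : Type := MvPolynomial ℕ F

/-- The field `F(u_1, u_2, …)` of rational functions in the variables `u_r` over `ℂ(ω)`. -/
abbrev KK : Type := FractionRing MvP

/-- Substituting `u_r = c` into a polynomial in the `u`'s. -/
def substOne (r : ℕ) (c : F) : MvP →ₐ[F] MvP :=
  MvPolynomial.aeval fun t => if t = r then MvPolynomial.C c else MvPolynomial.X t

/-- The variable `u_r` as an element of `KK`. -/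
def uVar (r : ℕ) : KK := algebraMap MvP KK (MvPolynomial.X r)

/-- A constant (an element of `ℂ(ω)`) as an element of `KK`. -/
def cK (x : F) : KK := algebraMap MvP KK (MvPolynomial.C x)

/-- The element `ω` of `KK`. -/
def ωK : KK := cK ωF

/-- `RegK r c f v` : the rational function `f ∈ F(u_1, u_2, …)`, viewed as a rational
function of the variable `u_r`, is regular at `u_r = c`, with value `v` there. -/
def RegK (r : ℕ) (c : F) (f v : KK) : Prop :=
  ∃ p q : MvP, substOne r c q ≠ 0 ∧
    f = algebraMap MvP KK p / algebraMap MvP KK q ∧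
    v = algebraMap MvP KK (substOne r c p) / algebraMap MvP KK (substOne r c q)

/-- The subring of "constants": the subring generated by the `s_i`, `e_i` and the
scalars from `ℂ(ω)` (i.e. the copy of the Brauer algebra `B_n(ω)` inside `B_n(ω) ⊗ KK`). -/
def constSubK [Algebra KK A] (s e : ℕ → A) : Subring A :=
  Subring.closure (Set.range s ∪ Set.range e ∪ Set.range fun x : F => algebraMap KK A (cK x))

/-- `RegStep s e r c a v` : the element `a` of `B ⊗ F(u_1,…,u_n)`, viewed as a rational
function of `u_r`, is regular at `u_r = c` with value `v`: it can be written as a finite sum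
`a = ∑ f_i • b_i` with constant `b_i` and coordinates `f_i` regular at `u_r = c` (denominators
not vanishing at `u_r = c`), whose values at `u_r = c` give `v = ∑ f_i(c) • b_i`. -/
def RegStep [Algebra KK A] (s e : ℕ → A) (r : ℕ) (c : F) (a v : A) : Prop :=
  ∃ (m : ℕ) (f g : Fin m → KK) (b : Fin m → A),
    (∀ i, RegK r c (f i) (g i)) ∧ (∀ i, b i ∈ constSubK s e) ∧
    a = ∑ i, f i • b i ∧ v = ∑ i, g i • b i

end BrauerFusion

namespace BrauerFusion

section Aux
variable {A : Type*} [Ring A]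
variable {R : Type*} [CommRing R] [Algebra R A] {n : ℕ} {ω : R} {s e : ℕ → A}

lemma sij_lt {i j : ℕ} (h : i + 1 < j) : sij s i j = s i * sij s (i+1) j * s i := by
  rw [sij, dif_pos h]

lemma sij_eq {i j : ℕ} (h : ¬ i + 1 < j) : sij s i j = s i := by
  rw [sij, dif_neg h]

lemma eij_lt {i j : ℕ} (h : i + 1 < j) :
    eij s e i j = sij s i (j-1) * e (j-1) * sij s i (j-1) := if_pos h

lemma eij_eq {i j : ℕ} (h : ¬ i + 1 < j) : eij s e i j = e i := if_neg h

lemma comm_ss (hB : IsBrauer n ω s e) {i k : ℕ} (hi : 1 ≤ i) (hin : i+1 ≤ n)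
    (hk : 1 ≤ k) (hkn : k+1 ≤ n) (h : i+1 < k ∨ k+1 < i) :
    s i * s k = s k * s i := by
  rcases h with h | h
  · exact hB.ss_comm i k hi hkn h
  · exact (hB.ss_comm k i hk hin h).symm

lemma comm_se (hB : IsBrauer n ω s e) {i k : ℕ} (hi : 1 ≤ i) (hin : i+1 ≤ n)
    (hk : 1 ≤ k) (hkn : k+1 ≤ n) (h : i+1 < k ∨ k+1 < i) :
    s i * e k = e k * s i := by
  rcases h with h | h
  · exact hB.se_comm i k hi hkn h
  · exact hB.es_comm k i hk hin h

/-- generators of `sij s i j` run over `i,…,j-1`; commutation with an outside `s k`. -/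
lemma sij_comm_s (hB : IsBrauer n ω s e) :
    ∀ d i j k, j ≤ i + d → 1 ≤ i → i < j → j ≤ n →
      1 ≤ k → k + 1 ≤ n → (k + 1 < i ∨ j < k) →
    sij s i j * s k = s k * sij s i j := by
  intro d
  induction d with
  | zero => intro i j k h h1 h2 h3; omega
  | succ d ih =>
    intro i j k hd h1 h2 h3 hk hkn hcond
    by_cases h : i + 1 < j
    · rw [sij_lt h]
      have hT : sij s (i+1) j * s k = s k * sij s (i+1) j :=
        ih (i+1) j k (by omega) (by omega) h h3 hk hkn (by omega)
      have hik : s i * s k = s k * s i :=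
        comm_ss hB h1 (by omega) hk hkn (by omega)
      calc s i * sij s (i+1) j * s i * s k
          = s i * (sij s (i+1) j * (s i * s k)) := by simp only [mul_assoc]
        _ = s i * (sij s (i+1) j * (s k * s i)) := by rw [hik]
        _ = s i * ((sij s (i+1) j * s k) * s i) := by simp only [mul_assoc]
        _ = s i * ((s k * sij s (i+1) j) * s i) := by rw [hT]
        _ = (s i * s k) * (sij s (i+1) j * s i) := by simp only [mul_assoc]
        _ = (s k * s i) * (sij s (i+1) j * s i) := by rw [hik]
        _ = s k * (s i * sij s (i+1) j * s i) := by simp only [mul_assoc]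
    · rw [sij_eq h]
      exact comm_ss hB h1 (by omega) hk hkn (by omega)

lemma sij_comm_e (hB : IsBrauer n ω s e) :
    ∀ d i j k, j ≤ i + d → 1 ≤ i → i < j → j ≤ n →
      1 ≤ k → k + 1 ≤ n → (k + 1 < i ∨ j < k) →
    sij s i j * e k = e k * sij s i j := by
  intro d
  induction d with
  | zero => intro i j k h h1 h2 h3; omega
  | succ d ih =>
    intro i j k hd h1 h2 h3 hk hkn hcond
    by_cases h : i + 1 < j
    · rw [sij_lt h]
      have hT : sij s (i+1) j * e k = e k * sij s (i+1) j :=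
        ih (i+1) j k (by omega) (by omega) h h3 hk hkn (by omega)
      have hik : s i * e k = e k * s i :=
        comm_se hB h1 (by omega) hk hkn (by omega)
      calc s i * sij s (i+1) j * s i * e k
          = s i * (sij s (i+1) j * (s i * e k)) := by simp only [mul_assoc]
        _ = s i * (sij s (i+1) j * (e k * s i)) := by rw [hik]
        _ = s i * ((sij s (i+1) j * e k) * s i) := by simp only [mul_assoc]
        _ = s i * ((e k * sij s (i+1) j) * s i) := by rw [hT]
        _ = (s i * e k) * (sij s (i+1) j * s i) := by simp only [mul_assoc]
        _ = (e k * s i) * (sij s (i+1) j * s i) := by rw [hik]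
        _ = e k * (s i * sij s (i+1) j * s i) := by simp only [mul_assoc]
    · rw [sij_eq h]
      exact comm_se hB h1 (by omega) hk hkn (by omega)


/-- Right recursion for `sij`. -/
lemma sij_right (hB : IsBrauer n ω s e) :
    ∀ d i j, j ≤ i + d → 1 ≤ i → i + 1 < j → j ≤ n →
    sij s i j = s (j-1) * sij s i (j-1) * s (j-1) := by
  intro d
  induction d with
  | zero => intro i j h h1 h2 h3; omega
  | succ d ih =>
    intro i j hd h1 h2 h3
    by_cases h : i + 2 < j
    · have hij1 : i + 1 < j - 1 := by omega
      have hIH : sij s (i+1) j = s (j-1) * sij s (i+1) (j-1) * s (j-1) :=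
        ih (i+1) j (by omega) (by omega) (by omega) h3
      have hcomm : s i * s (j-1) = s (j-1) * s i :=
        comm_ss hB h1 (by omega) (by omega) (by omega) (by omega)
      rw [sij_lt h2, hIH, sij_lt hij1]
      calc s i * (s (j-1) * sij s (i+1) (j-1) * s (j-1)) * s i
          = (s i * s (j-1)) * (sij s (i+1) (j-1) * (s (j-1) * s i)) := by
            simp only [mul_assoc]
        _ = (s (j-1) * s i) * (sij s (i+1) (j-1) * (s i * s (j-1))) := by
            rw [hcomm]
        _ = s (j-1) * (s i * sij s (i+1) (j-1) * s i) * s (j-1) := by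
            simp only [mul_assoc]
    · -- j = i + 2
      have hj : j = i + 2 := by omega
      subst hj
      have h1' : ¬ (i + 1) + 1 < i + 2 := by omega
      have h2' : ¬ i + 1 < i + 2 - 1 := by omega
      rw [sij_lt h2, sij_eq h1']
      have : i + 2 - 1 = i + 1 := by omega
      rw [this, sij_eq (by omega : ¬ i + 1 < i + 1)]
      exact hB.braid i h1 h3

/-- `s_i e_{i+1} s_i = s_{i+1} e_i s_{i+1}`. -/
lemma ses (hB : IsBrauer n ω s e) {i : ℕ} (hi : 1 ≤ i) (hn : i + 2 ≤ n) :
    s i * e (i+1) * s i = s (i+1) * e i * s (i+1) := by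
  have h1 := hB.see i hi hn
  have h2 := hB.ees i hi hn
  calc s i * e (i+1) * s i
      = s i * (e (i+1) * e i * s (i+1)) := by rw [h2, ← mul_assoc]
    _ = (s i * e (i+1) * e i) * s (i+1) := by simp only [mul_assoc]
    _ = s (i+1) * e i * s (i+1) := by rw [h1]

/-- Left recursion for `eij`. -/
lemma eij_left (hB : IsBrauer n ω s e) {r m : ℕ}
    (hr : 1 ≤ r) (hrm : r + 1 < m) (hmn : m ≤ n) :
    eij s e r m = s r * eij s e (r+1) m * s r := by
  by_cases h : r + 2 < m
  · have hm1 : r + 1 < m - 1 := by omega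
    rw [eij_lt hrm, eij_lt (by omega : r + 1 + 1 < m), sij_lt hm1]
    have hcomm : s r * e (m-1) = e (m-1) * s r :=
      comm_se hB hr (by omega) (by omega) (by omega) (by omega)
    have hss : s r * s r = 1 := hB.ss r hr (by omega)
    calc s r * sij s (r+1) (m-1) * s r * e (m-1) * (s r * sij s (r+1) (m-1) * s r)
        = s r * (sij s (r+1) (m-1) * ((s r * e (m-1)) * s r) * sij s (r+1) (m-1)) * s r := by
          simp only [mul_assoc]
      _ = s r * (sij s (r+1) (m-1) * ((e (m-1) * s r) * s r) * sij s (r+1) (m-1)) * s r := by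
          rw [hcomm]
      _ = s r * (sij s (r+1) (m-1) * (e (m-1) * (s r * s r)) * sij s (r+1) (m-1)) * s r := by
          simp only [mul_assoc]
      _ = s r * (sij s (r+1) (m-1) * e (m-1) * sij s (r+1) (m-1)) * s r := by
          rw [hss, mul_one]
  · -- m = r + 2
    have hm : m = r + 2 := by omega
    subst hm
    rw [eij_lt hrm, eij_eq (by omega : ¬ (r+1) + 1 < r + 2)]
    have h1 : r + 2 - 1 = r + 1 := by omega
    rw [h1, sij_eq (by omega : ¬ r + 1 < r + 1)]

/-- Right recursion for `eij`. -/
lemma eij_right (hB : IsBrauer n ω s e) :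
    ∀ d r q, q ≤ r + d → 1 ≤ r → r + 1 < q → q ≤ n →
    eij s e r q = s (q-1) * eij s e r (q-1) * s (q-1) := by
  intro d
  induction d with
  | zero => intro r q h h1 h2 h3; omega
  | succ d ih =>
    intro r q hd h1 h2 h3
    by_cases h : r + 2 < q
    · have hIH : eij s e (r+1) q = s (q-1) * eij s e (r+1) (q-1) * s (q-1) :=
        ih (r+1) q (by omega) (by omega) (by omega) h3
      have hcomm : s r * s (q-1) = s (q-1) * s r :=
        comm_ss hB h1 (by omega) (by omega) (by omega) (by omega)
      rw [eij_left hB h1 h2 h3, hIH,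
        eij_left hB h1 (by omega : r + 1 < q - 1) (by omega)]
      calc s r * (s (q-1) * eij s e (r+1) (q-1) * s (q-1)) * s r
          = (s r * s (q-1)) * (eij s e (r+1) (q-1) * (s (q-1) * s r)) := by
            simp only [mul_assoc]
        _ = (s (q-1) * s r) * (eij s e (r+1) (q-1) * (s r * s (q-1))) := by
            rw [hcomm]
        _ = s (q-1) * (s r * eij s e (r+1) (q-1) * s r) * s (q-1) := by
            simp only [mul_assoc]
    · -- q = r + 2
      have hq : q = r + 2 := by omega
      subst hq
      have h1' : r + 2 - 1 = r + 1 := by omega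
      rw [eij_lt h2, h1', sij_eq (by omega : ¬ r + 1 < r + 1),
        eij_eq (by omega : ¬ r + 1 < r + 1)]
      exact ses hB h1 h3


/-- `s_{jm} s_{j-1,m} = s_{j-1} s_{jm}`. -/
lemma s_conj_base (hB : IsBrauer n ω s e) :
    ∀ d j m, m ≤ j + d → 2 ≤ j → j < m → m ≤ n →
    sij s j m * sij s (j-1) m = s (j-1) * sij s j m := by
  intro d
  induction d with
  | zero => intro j m h h1 h2 h3; omega
  | succ d ih =>
    intro j m hd h1 h2 h3
    by_cases h : j + 1 < m
    · have hIHs : sij s j m = s (m-1) * sij s j (m-1) * s (m-1) :=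
        sij_right hB m j m (by omega) (by omega) h h3
      have hIHs' : sij s (j-1) m = s (m-1) * sij s (j-1) (m-1) * s (m-1) :=
        sij_right hB m (j-1) m (by omega) (by omega) (by omega) h3
      have hIH : sij s j (m-1) * sij s (j-1) (m-1) = s (j-1) * sij s j (m-1) :=
        ih j (m-1) (by omega) h1 (by omega) (by omega)
      have hss : s (m-1) * s (m-1) = 1 := hB.ss (m-1) (by omega) (by omega)
      have hcomm : s (j-1) * s (m-1) = s (m-1) * s (j-1) :=
        comm_ss hB (by omega) (by omega) (by omega) (by omega) (by omega)
      rw [hIHs, hIHs']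
      calc s (m-1) * sij s j (m-1) * s (m-1) * (s (m-1) * sij s (j-1) (m-1) * s (m-1))
          = s (m-1) * (sij s j (m-1) * ((s (m-1) * s (m-1)) * (sij s (j-1) (m-1) * s (m-1)))) := by
            simp only [mul_assoc]
        _ = s (m-1) * (sij s j (m-1) * sij s (j-1) (m-1)) * s (m-1) := by
            rw [hss, one_mul]; simp only [mul_assoc]
        _ = s (m-1) * (s (j-1) * sij s j (m-1)) * s (m-1) := by rw [hIH]
        _ = (s (m-1) * s (j-1)) * (sij s j (m-1) * s (m-1)) := by simp only [mul_assoc]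
        _ = (s (j-1) * s (m-1)) * (sij s j (m-1) * s (m-1)) := by rw [hcomm]
        _ = s (j-1) * (s (m-1) * sij s j (m-1) * s (m-1)) := by simp only [mul_assoc]
    · -- m = j + 1
      have hm : m = j + 1 := by omega
      subst hm
      rw [sij_eq (by omega : ¬ j + 1 < j + 1), sij_lt (by omega : (j-1) + 1 < j + 1)]
      have hj1 : j - 1 + 1 = j := by omega
      rw [hj1, sij_eq (by omega : ¬ j + 1 < j + 1)]
      have hbraid := hB.braid (j-1) (by omega) (by omega)
      rw [hj1] at hbraid
      have hss : s j * s j = 1 := hB.ss j (by omega) h3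
      calc s j * (s (j-1) * s j * s (j-1))
          = s j * (s j * s (j-1) * s j) := by rw [hbraid]
        _ = (s j * s j) * (s (j-1) * s j) := by simp only [mul_assoc]
        _ = s (j-1) * s j := by rw [hss, one_mul]


/-- `s_{jm} s_{rm} = s_{rj} s_{jm}` for `r < j < m`. -/
lemma s_conj (hB : IsBrauer n ω s e) :
    ∀ d r j m, j ≤ r + d → 1 ≤ r → r < j → j < m → m ≤ n →
    sij s j m * sij s r m = sij s r j * sij s j m := by
  intro d
  induction d with
  | zero => intro r j m h h1 h2 h3 h4; omega
  | succ d ih =>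
    intro r j m hd h1 h2 h3 h4
    by_cases h : r + 1 < j
    · have hIH : sij s j m * sij s (r+1) m = sij s (r+1) j * sij s j m :=
        ih (r+1) j m (by omega) (by omega) h h3 h4
      have hcomm : sij s j m * s r = s r * sij s j m :=
        sij_comm_s hB m j m r (by omega) (by omega) h3 h4 h1 (by omega) (Or.inl (by omega))
      rw [sij_lt (by omega : r + 1 < m), sij_lt h]
      calc sij s j m * (s r * sij s (r+1) m * s r)
          = (sij s j m * s r) * (sij s (r+1) m * s r) := by simp only [mul_assoc]
        _ = (s r * sij s j m) * (sij s (r+1) m * s r) := by rw [hcomm]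
        _ = s r * (sij s j m * sij s (r+1) m) * s r := by simp only [mul_assoc]
        _ = s r * (sij s (r+1) j * sij s j m) * s r := by rw [hIH]
        _ = (s r * sij s (r+1) j * s r) * sij s j m := by
            simp only [mul_assoc]
            rw [show sij s (r+1) j * (sij s j m * s r) = sij s (r+1) j * (s r * sij s j m) from by rw [hcomm]]
    · -- r = j - 1
      have hr : r = j - 1 := by omega
      subst hr
      rw [sij_eq (by omega : ¬ (j-1) + 1 < j)]
      exact s_conj_base hB m j m (by omega) (by omega) h3 h4

/-- `s_{jm} e_{j-1,m} = e_{j-1} s_{jm}`. -/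
lemma e_conj_base (hB : IsBrauer n ω s e) :
    ∀ d j m, m ≤ j + d → 2 ≤ j → j < m → m ≤ n →
    sij s j m * eij s e (j-1) m = e (j-1) * sij s j m := by
  intro d
  induction d with
  | zero => intro j m h h1 h2 h3; omega
  | succ d ih =>
    intro j m hd h1 h2 h3
    by_cases h : j + 1 < m
    · have hIHs : sij s j m = s (m-1) * sij s j (m-1) * s (m-1) :=
        sij_right hB m j m (by omega) (by omega) h h3
      have hIHe : eij s e (j-1) m = s (m-1) * eij s e (j-1) (m-1) * s (m-1) :=
        eij_right hB m (j-1) m (by omega) (by omega) (by omega) h3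
      have hIH : sij s j (m-1) * eij s e (j-1) (m-1) = e (j-1) * sij s j (m-1) :=
        ih j (m-1) (by omega) h1 (by omega) (by omega)
      have hss : s (m-1) * s (m-1) = 1 := hB.ss (m-1) (by omega) (by omega)
      have hcomm : s (m-1) * e (j-1) = e (j-1) * s (m-1) :=
        comm_se hB (by omega) (by omega) (by omega) (by omega) (by omega)
      rw [hIHs, hIHe]
      calc s (m-1) * sij s j (m-1) * s (m-1) * (s (m-1) * eij s e (j-1) (m-1) * s (m-1))
          = s (m-1) * (sij s j (m-1) * ((s (m-1) * s (m-1)) * (eij s e (j-1) (m-1) * s (m-1)))) := by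
            simp only [mul_assoc]
        _ = s (m-1) * (sij s j (m-1) * eij s e (j-1) (m-1)) * s (m-1) := by
            rw [hss, one_mul]; simp only [mul_assoc]
        _ = s (m-1) * (e (j-1) * sij s j (m-1)) * s (m-1) := by rw [hIH]
        _ = (s (m-1) * e (j-1)) * (sij s j (m-1) * s (m-1)) := by simp only [mul_assoc]
        _ = (e (j-1) * s (m-1)) * (sij s j (m-1) * s (m-1)) := by rw [hcomm]
        _ = e (j-1) * (s (m-1) * sij s j (m-1) * s (m-1)) := by simp only [mul_assoc]
    · -- m = j + 1
      have hm : m = j + 1 := by omega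
      subst hm
      rw [sij_eq (by omega : ¬ j + 1 < j + 1),
        eij_lt (by omega : (j-1) + 1 < j + 1)]
      have hj1 : j + 1 - 1 = j := by omega
      rw [hj1, sij_eq (by omega : ¬ j - 1 + 1 < j)]
      have hses := ses hB (i := j - 1) (by omega) (by omega)
      rw [show j - 1 + 1 = j from by omega] at hses
      have hss : s j * s j = 1 := hB.ss j (by omega) h3
      calc s j * (s (j-1) * e j * s (j-1))
          = s j * (s j * e (j-1) * s j) := by rw [hses]
        _ = (s j * s j) * (e (j-1) * s j) := by simp only [mul_assoc]
        _ = e (j-1) * s j := by rw [hss, one_mul]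

/-- `s_{jm} e_{rm} = e_{rj} s_{jm}` for `r < j < m`. -/
lemma e_conj (hB : IsBrauer n ω s e) :
    ∀ d r j m, j ≤ r + d → 1 ≤ r → r < j → j < m → m ≤ n →
    sij s j m * eij s e r m = eij s e r j * sij s j m := by
  intro d
  induction d with
  | zero => intro r j m h h1 h2 h3 h4; omega
  | succ d ih =>
    intro r j m hd h1 h2 h3 h4
    by_cases h : r + 1 < j
    · have hIH : sij s j m * eij s e (r+1) m = eij s e (r+1) j * sij s j m :=
        ih (r+1) j m (by omega) (by omega) h h3 h4
      have hcomm : sij s j m * s r = s r * sij s j m :=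
        sij_comm_s hB m j m r (by omega) (by omega) h3 h4 h1 (by omega) (Or.inl (by omega))
      rw [eij_left hB h1 (by omega : r + 1 < m) h4,
        eij_left hB h1 h (by omega : j ≤ n)]
      calc sij s j m * (s r * eij s e (r+1) m * s r)
          = (sij s j m * s r) * (eij s e (r+1) m * s r) := by simp only [mul_assoc]
        _ = (s r * sij s j m) * (eij s e (r+1) m * s r) := by rw [hcomm]
        _ = s r * (sij s j m * eij s e (r+1) m) * s r := by simp only [mul_assoc]
        _ = s r * (eij s e (r+1) j * sij s j m) * s r := by rw [hIH]
        _ = (s r * eij s e (r+1) j * s r) * sij s j m := by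
            simp only [mul_assoc]
            rw [show eij s e (r+1) j * (sij s j m * s r) = eij s e (r+1) j * (s r * sij s j m) from by rw [hcomm]]
    · -- r = j - 1
      have hr : r = j - 1 := by omega
      subst hr
      rw [eij_eq (by omega : ¬ (j-1) + 1 < j)]
      exact e_conj_base hB m j m (by omega) (by omega) h3 h4

end Aux

/-- For `1 < j < m ≤ n`, with `x_j^{(m)} = (ω-1)/2 + ∑_{r=1}^{j-1}(s_{rm} - e_{rm})`,
one has `s_{jm} x_j^{(m)} = x_j s_{jm}` in `B_n(ω)`, where `x_j` is the Jucys–Murphy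
element.  This is stated in any algebra over `F = ℂ(ω)` whose elements `s i`, `e i`
satisfy the Brauer relations. -/
theorem sjm_jmM {A : Type*} [Ring A] [Algebra F A]
    (n j m : ℕ) (hj : 1 < j) (hjm : j < m) (hmn : m ≤ n)
    (s e : ℕ → A) (hB : IsBrauer n ωF s e) :
    sij s j m * jmM ωF s e j m = jm ωF s e j * sij s j m := by
  rw [jm, jmM, jmM, mul_add, add_mul, Finset.mul_sum, Finset.sum_mul]
  congr 1
  · exact (Algebra.commutes ((ωF - 1)/2) (sij s j m)).symm
  · refine Finset.sum_congr rfl fun r hr => ?_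
    rw [Finset.mem_Icc] at hr
    rw [mul_sub, sub_mul,
      s_conj hB j r j m (by omega) hr.1 (by omega) hjm hmn,
      e_conj hB j r j m (by omega) hr.1 (by omega) hjm hmn]

end BrauerFusion
end
end

section
/- In B_n(ω), the Jucys–Murphy element x_n commutes with each of the generators s_1,…,s_{n−2}, e_1,…,e_{n−2} (hence with the whole subalgebra B_{n−1}(ω)), and consequently the elements x_1,…,x_n pairwise commute. -/
/-!
Common definitions for the fusion procedure for the Brauer algebra
(Isaev–Molev, "Fusion procedure for the Brauer algebra").
-/

noncomputable section
open scoped BigOperators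
open Classical

namespace BrauerFusion

section BrauerProof

variable {R : Type*} {A : Type*} [Field R] [Ring A] [Algebra R A]

private lemma pullL {g c X : A} (h : g * c = c * g) : g * (c * X * c) = c * (g * X) * c := by
  simp only [← mul_assoc]; rw [h]

private lemma pushR {g c X : A} (h : g * c = c * g) : (c * X * c) * g = c * (X * g) * c := by
  simp only [mul_assoc]; rw [← h]

private lemma pullpush {g c X : A} (h1 : g * c = c * g) (h2 : g * X = X * g) :
    g * (c * X * c) = (c * X * c) * g := by
  rw [pullL h1, h2, ← pushR h1]

private lemma sandwich {c x y : A} (hc : c * c = 1) (hy : c * y = y * c) :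
    (c * x * c) * y * (c * x * c) = c * (x * y * x) * c := by
  have h : ∀ t : A, c * (y * (c * t)) = y * t := by
    intro t
    rw [← mul_assoc, ← mul_assoc, hy, mul_assoc y, hc, mul_one]
  simp only [mul_assoc]
  rw [h]

private lemma swap_conj {a c X : A} (h : a * c = c * a) : a * (c * X * c) * a = c * (a * X * a) * c := by
  simp only [mul_assoc]
  rw [← mul_assoc a c, h, mul_assoc, ← mul_assoc c a, ← h, mul_assoc]

private lemma conj_comm {a b g g' W : A} (hab : a * b = 1) (hg : b * g * a = g')
    (hW : g' * W = W * g') : g * (a * W * b) = (a * W * b) * g := by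
  have h1 : g * a = a * g' := by
    rw [← hg]
    calc g * a = (a * b) * (g * a) := by rw [hab, one_mul]
    _ = a * (b * g * a) := by simp only [mul_assoc]
  have h2 : g' * b = b * g := by
    rw [← hg]
    calc (b * g * a) * b = b * g * (a * b) := by simp only [mul_assoc]
    _ = b * g := by rw [hab, mul_one]
  calc g * (a * W * b) = (g * a) * W * b := by simp only [mul_assoc]
  _ = (a * g') * W * b := by rw [h1]
  _ = a * (g' * W) * b := by simp only [mul_assoc]
  _ = a * (W * g') * b := by rw [hW]
  _ = (a * W) * (g' * b) := by simp only [mul_assoc]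
  _ = (a * W) * (b * g) := by rw [h2]
  _ = (a * W * b) * g := by simp only [mul_assoc]

lemma sij_of_lt (s : ℕ → A) {i j : ℕ} (h : i + 1 < j) :
    sij s i j = s i * sij s (i+1) j * s i := by rw [sij, dif_pos h]

lemma sij_of_ge (s : ℕ → A) {i j : ℕ} (h : ¬ i + 1 < j) : sij s i j = s i := by
  rw [sij, dif_neg h]

lemma eij_of_lt (s e : ℕ → A) {i j : ℕ} (h : i + 1 < j) :
    eij s e i j = sij s i (j-1) * e (j-1) * sij s i (j-1) := by rw [eij, if_pos h]

lemma eij_of_ge (s e : ℕ → A) {i j : ℕ} (h : ¬ i + 1 < j) : eij s e i j = e i := by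
  rw [eij, if_neg h]

lemma commute_sij (x : A) (s : ℕ → A) (k m : ℕ) (hkm : k < m)
    (h : ∀ j, k ≤ j → j < m → Commute x (s j)) : Commute x (sij s k m) := by
  by_cases hlt : k + 1 < m
  · rw [sij_of_lt s hlt]
    exact ((h k le_rfl hkm).mul_right (commute_sij x s (k+1) m hlt
      (fun j hj1 hj2 => h j (by omega) hj2))).mul_right (h k le_rfl hkm)
  · rw [sij_of_ge s hlt]; exact h k le_rfl hkm
termination_by m - k

lemma commute_eij (x : A) (s e : ℕ → A) (k m : ℕ) (hkm : k < m)
    (hs : ∀ j, k ≤ j → j < m → Commute x (s j))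
    (he : ∀ j, k ≤ j → j < m → Commute x (e j)) : Commute x (eij s e k m) := by
  by_cases hlt : k + 1 < m
  · rw [eij_of_lt s e hlt]
    have hc : Commute x (sij s k (m-1)) := commute_sij x s k (m-1) (by omega)
      (fun j hj1 hj2 => hs j hj1 (by omega))
    exact (hc.mul_right (he (m-1) (by omega) (by omega))).mul_right hc
  · rw [eij_of_ge s e hlt]; exact he k le_rfl hkm

variable {n : ℕ} {ω : R} {s e : ℕ → A}

lemma idA (hB : IsBrauer n ω s e) {j : ℕ} (h1 : 1 ≤ j) (h2 : j + 2 ≤ n) :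
    e j * s (j+1) = e j * e (j+1) * s j := by
  have h := congrArg (fun t => e j * t) (hB.ees j h1 h2)
  simp only [← mul_assoc] at h
  rwa [hB.eee₁ j h1 h2] at h

lemma idA' (hB : IsBrauer n ω s e) {j : ℕ} (h1 : 1 ≤ j) (h2 : j + 2 ≤ n) :
    s j * e (j+1) = s (j+1) * e j * e (j+1) := by
  have h := congrArg (fun t => t * e (j+1)) (hB.see j h1 h2)
  simp only [mul_assoc] at h
  have h3 := hB.eee₂ j h1 h2
  simp only [mul_assoc] at h3
  rw [h3] at h
  rw [h, ← mul_assoc]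

lemma idT (hB : IsBrauer n ω s e) {j : ℕ} (h1 : 1 ≤ j) (h2 : j + 2 ≤ n) :
    s j * e (j+1) * s j = s (j+1) * e j * s (j+1) := by
  have hA : s (j+1) * (s j * e (j+1)) = e j * e (j+1) := by
    rw [idA' hB h1 h2, ← mul_assoc, ← mul_assoc, hB.ss (j+1) (by omega) (by omega), one_mul]
  have hBB : (e j * s (j+1)) * s j = e j * e (j+1) := by
    rw [idA hB h1 h2, mul_assoc, hB.ss j h1 (by omega), mul_one]
  have hC : s (j+1) * (s j * e (j+1)) = (e j * s (j+1)) * s j := hA.trans hBB.symm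
  have h4 : s j * e (j+1) = s (j+1) * ((e j * s (j+1)) * s j) := by
    have h5 := congrArg (fun t => s (j+1) * t) hC
    rw [← mul_assoc, hB.ss (j+1) (by omega) (by omega), one_mul] at h5
    exact h5
  calc s j * e (j+1) * s j
      = s (j+1) * ((e j * s (j+1)) * s j) * s j := by rw [h4]
    _ = s (j+1) * (e j * s (j+1)) * (s j * s j) := by simp only [mul_assoc]
    _ = s (j+1) * e j * s (j+1) := by rw [hB.ss j h1 (by omega), mul_one, ← mul_assoc]

lemma idT' (hB : IsBrauer n ω s e) {j : ℕ} (h1 : 1 ≤ j) (h2 : j + 2 ≤ n) :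
    s (j+1) * s j * e (j+1) * s j * s (j+1) = e j := by
  calc s (j+1) * s j * e (j+1) * s j * s (j+1)
      = s (j+1) * (s j * e (j+1) * s j) * s (j+1) := by simp only [mul_assoc]
    _ = s (j+1) * (s (j+1) * e j * s (j+1)) * s (j+1) := by rw [idT hB h1 h2]
    _ = e j := by
        simp only [← mul_assoc]
        rw [hB.ss (j+1) (by omega) (by omega), one_mul, mul_assoc,
          hB.ss (j+1) (by omega) (by omega), mul_one]

lemma idBr' (hB : IsBrauer n ω s e) {j : ℕ} (h1 : 1 ≤ j) (h2 : j + 2 ≤ n) :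
    s (j+1) * s j * s (j+1) * s j * s (j+1) = s j := by
  calc s (j+1) * s j * s (j+1) * s j * s (j+1)
      = s (j+1) * (s j * s (j+1) * s j) * s (j+1) := by simp only [mul_assoc]
    _ = s (j+1) * (s (j+1) * s j * s (j+1)) * s (j+1) := by rw [hB.braid j h1 h2]
    _ = s j := by
        simp only [← mul_assoc]
        rw [hB.ss (j+1) (by omega) (by omega), one_mul, mul_assoc,
          hB.ss (j+1) (by omega) (by omega), mul_one]

lemma eij_rec_bot (hB : IsBrauer n ω s e) (k m : ℕ) (h1 : 1 ≤ k) (h2 : k + 2 ≤ m)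
    (h3 : m ≤ n) : eij s e k m = s k * eij s e (k+1) m * s k := by
  by_cases hc : k + 2 < m
  · rw [eij_of_lt s e (show k + 1 < m by omega), eij_of_lt s e (show k + 1 + 1 < m by omega),
      sij_of_lt s (show k + 1 < m - 1 by omega)]
    exact sandwich (hB.ss k h1 (by omega)) (hB.se_comm k (m-1) h1 (by omega) (by omega))
  · have hm : m = k + 2 := by omega
    subst hm
    rw [eij_of_lt s e (show k + 1 < k + 2 by omega), eij_of_ge s e (show ¬ k + 1 + 1 < k + 2 by omega),
      show k + 2 - 1 = k + 1 from rfl, sij_of_ge s (show ¬ k + 1 < k + 1 by omega)]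

lemma sij_rec_top (hB : IsBrauer n ω s e) (k m : ℕ) (h1 : 1 ≤ k) (h2 : k + 2 ≤ m)
    (h3 : m ≤ n) : sij s k m = s (m-1) * sij s k (m-1) * s (m-1) := by
  by_cases hc : k + 3 ≤ m
  · rw [sij_of_lt s (show k + 1 < m by omega), sij_rec_top hB (k+1) m (by omega) (by omega) h3,
      sij_of_lt s (show k + 1 < m - 1 by omega)]
    exact swap_conj (hB.ss_comm k (m-1) h1 (by omega) (by omega))
  · have hm : m = k + 2 := by omega
    subst hm
    rw [show k + 2 - 1 = k + 1 from rfl, sij_of_lt s (show k + 1 < k + 2 by omega),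
      sij_of_ge s (show ¬ k + 1 + 1 < k + 2 by omega), sij_of_ge s (show ¬ k + 1 < k + 1 by omega)]
    exact hB.braid k h1 h3
termination_by m - k

lemma eij_rec_top (hB : IsBrauer n ω s e) (k m : ℕ) (h1 : 1 ≤ k) (h2 : k + 2 ≤ m)
    (h3 : m ≤ n) : eij s e k m = s (m-1) * eij s e k (m-1) * s (m-1) := by
  by_cases hc : k + 3 ≤ m
  · rw [eij_rec_bot hB k m h1 h2 h3, eij_rec_top hB (k+1) m (by omega) (by omega) h3,
      eij_rec_bot hB k (m-1) h1 (by omega) (by omega)]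
    exact swap_conj (hB.ss_comm k (m-1) h1 (by omega) (by omega))
  · have hm : m = k + 2 := by omega
    subst hm
    rw [show k + 2 - 1 = k + 1 from rfl, eij_of_lt s e (show k + 1 < k + 2 by omega),
      eij_of_ge s e (show ¬ k + 1 < k + 1 by omega),
      show k + 2 - 1 = k + 1 from rfl, sij_of_ge s (show ¬ k + 1 < k + 1 by omega)]
    exact idT hB h1 h3
termination_by m - k

lemma lemP (hB : IsBrauer n ω s e) (i m : ℕ) (h1 : 1 ≤ i) (h2 : i + 2 ≤ m) (h3 : m ≤ n) :
    e i * sij s (i+1) m = e i * eij s e (i+1) m * s i := by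
  by_cases hc : i + 3 ≤ m
  · rw [sij_rec_top hB (i+1) m (by omega) (by omega) h3,
      eij_rec_top hB (i+1) m (by omega) (by omega) h3,
      pullL ((hB.es_comm i (m-1) h1 (by omega) (by omega)).symm),
      lemP hB i (m-1) h1 (by omega) (by omega),
      pullL ((hB.es_comm i (m-1) h1 (by omega) (by omega)).symm),
      pushR (hB.ss_comm i (m-1) h1 (by omega) (by omega))]
  · have hm : m = i + 2 := by omega
    subst hm
    rw [sij_of_ge s (show ¬ i + 1 + 1 < i + 2 by omega),
      eij_of_ge s e (show ¬ i + 1 + 1 < i + 2 by omega)]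
    exact idA hB h1 h3
termination_by m - i

lemma lemP' (hB : IsBrauer n ω s e) (i m : ℕ) (h1 : 1 ≤ i) (h2 : i + 2 ≤ m) (h3 : m ≤ n) :
    sij s (i+1) m * e i = s i * eij s e (i+1) m * e i := by
  by_cases hc : i + 3 ≤ m
  · rw [sij_rec_top hB (i+1) m (by omega) (by omega) h3,
      eij_rec_top hB (i+1) m (by omega) (by omega) h3,
      pushR ((hB.es_comm i (m-1) h1 (by omega) (by omega)).symm),
      lemP' hB i (m-1) h1 (by omega) (by omega),
      pullL (hB.ss_comm i (m-1) h1 (by omega) (by omega)),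
      pushR ((hB.es_comm i (m-1) h1 (by omega) (by omega)).symm)]
  · have hm : m = i + 2 := by omega
    subst hm
    rw [sij_of_ge s (show ¬ i + 1 + 1 < i + 2 by omega),
      eij_of_ge s e (show ¬ i + 1 + 1 < i + 2 by omega)]
    exact (hB.see i h1 h3).symm
termination_by m - i

lemma gen_low (hB : IsBrauer n ω s e) (i k m : ℕ) (hk : 1 ≤ k) (hki : k < i)
    (h2 : i + 2 ≤ m) (h3 : m ≤ n) :
    (s i * sij s k m = sij s k m * s i) ∧ (e i * sij s k m = sij s k m * e i) ∧
    (s i * eij s e k m = eij s e k m * s i) ∧ (e i * eij s e k m = eij s e k m * e i) := by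
  by_cases hc : k + 1 < i
  · obtain ⟨hss, hes, hse, hee⟩ := gen_low hB i (k+1) m (by omega) hc h2 h3
    have hsrec : sij s k m = s k * sij s (k+1) m * s k := sij_of_lt s (by omega)
    have herec : eij s e k m = s k * eij s e (k+1) m * s k := eij_rec_bot hB k m hk (by omega) h3
    have c1 : s i * s k = s k * s i := (hB.ss_comm k i hk (by omega) hc).symm
    have c2 : e i * s k = s k * e i := (hB.se_comm k i hk (by omega) hc).symm
    exact ⟨by rw [hsrec]; exact pullpush c1 hss, by rw [hsrec]; exact pullpush c2 hes,
      by rw [herec]; exact pullpush c1 hse, by rw [herec]; exact pullpush c2 hee⟩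
  · have hik : i = k + 1 := by omega
    subst hik
    have hcs : Commute (s k) (sij s (k+1+1) m) := commute_sij (s k) s (k+1+1) m (by omega)
      (fun j hj1 hj2 => hB.ss_comm k j hk (by omega) (by omega))
    have hce : Commute (s k) (eij s e (k+1+1) m) := commute_eij (s k) s e (k+1+1) m (by omega)
      (fun j hj1 hj2 => hB.ss_comm k j hk (by omega) (by omega))
      (fun j hj1 hj2 => hB.se_comm k j hk (by omega) (by omega))
    have hds : Commute (e k) (sij s (k+1+1) m) := commute_sij (e k) s (k+1+1) m (by omega)
      (fun j hj1 hj2 => (hB.es_comm k j hk (by omega) (by omega)).symm)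
    have hde : Commute (e k) (eij s e (k+1+1) m) := commute_eij (e k) s e (k+1+1) m (by omega)
      (fun j hj1 hj2 => (hB.es_comm k j hk (by omega) (by omega)).symm)
      (fun j hj1 hj2 => hB.ee_comm k j hk (by omega) (by omega))
    have hs1 : sij s k m = (s k * s (k+1)) * sij s (k+1+1) m * (s (k+1) * s k) := by
      rw [sij_of_lt s (show k + 1 < m by omega), sij_of_lt s (show k + 1 + 1 < m by omega)]
      simp only [mul_assoc]
    have he1 : eij s e k m = (s k * s (k+1)) * eij s e (k+1+1) m * (s (k+1) * s k) := by
      rw [eij_rec_bot hB k m hk (by omega) h3, eij_rec_bot hB (k+1) m (by omega) (by omega) h3]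
      simp only [mul_assoc]
    have hab : (s k * s (k+1)) * (s (k+1) * s k) = 1 := by
      rw [mul_assoc, ← mul_assoc (s (k+1)), hB.ss (k+1) (by omega) (by omega), one_mul,
        hB.ss k hk (by omega)]
    have hbsa : (s (k+1) * s k) * s (k+1) * (s k * s (k+1)) = s k := by
      calc (s (k+1) * s k) * s (k+1) * (s k * s (k+1))
          = s (k+1) * s k * s (k+1) * s k * s (k+1) := by simp only [mul_assoc]
        _ = s k := idBr' hB hk (by omega)
    have hbea : (s (k+1) * s k) * e (k+1) * (s k * s (k+1)) = e k := by
      calc (s (k+1) * s k) * e (k+1) * (s k * s (k+1))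
          = s (k+1) * s k * e (k+1) * s k * s (k+1) := by simp only [mul_assoc]
        _ = e k := idT' hB hk (by omega)
    exact ⟨by rw [hs1]; exact conj_comm hab hbsa hcs,
      by rw [hs1]; exact conj_comm hab hbea hds,
      by rw [he1]; exact conj_comm hab hbsa hce,
      by rw [he1]; exact conj_comm hab hbea hde⟩
termination_by i - k

lemma jm_gen (hB : IsBrauer n ω s e) (m i : ℕ) (h1 : 1 ≤ i) (h2 : i + 2 ≤ m) (h3 : m ≤ n) :
    Commute (jm ω s e m) (s i) ∧ Commute (jm ω s e m) (e i) := by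
  have hjm : jm ω s e m = algebraMap R A ((ω - 1)/2)
      + ∑ r ∈ Finset.Icc 1 (m-1), (sij s r m - eij s e r m) := rfl
  have hsum : ∑ r ∈ Finset.Icc 1 (m-1), (sij s r m - eij s e r m)
      = (∑ r ∈ ((Finset.Icc 1 (m-1)).erase i).erase (i+1), (sij s r m - eij s e r m))
        + ((sij s (i+1) m - eij s e (i+1) m) + (sij s i m - eij s e i m)) := by
    rw [← add_assoc, Finset.sum_erase_add _ _ (show i+1 ∈ (Finset.Icc 1 (m-1)).erase i by
        simp only [Finset.mem_erase, Finset.mem_Icc]; omega),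
      Finset.sum_erase_add _ _ (show i ∈ Finset.Icc 1 (m-1) by
        simp only [Finset.mem_Icc]; omega)]
  have main : ∀ g : A,
      (∀ r ∈ ((Finset.Icc 1 (m-1)).erase i).erase (i+1), Commute g (sij s r m - eij s e r m)) →
      Commute g ((sij s (i+1) m - eij s e (i+1) m) + (sij s i m - eij s e i m)) →
      Commute (jm ω s e m) g := by
    intro g hrest hpair
    refine Commute.symm ?_
    rw [hjm, hsum]
    have hc0 : Commute g (algebraMap R A ((ω - 1)/2)) := (Algebra.commutes _ g).symm
    exact hc0.add_right ((Commute.sum_right _ _ _ hrest).add_right hpair)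
  have E1 : sij s i m = s i * sij s (i+1) m * s i := sij_of_lt s (by omega)
  have E2 : eij s e i m = s i * eij s e (i+1) m * s i := eij_rec_bot hB i m h1 h2 h3
  have hss : s i * s i = 1 := hB.ss i h1 (by omega)
  constructor
  · refine main (s i) ?_ ?_
    · intro r hr
      simp only [Finset.mem_erase, Finset.mem_Icc] at hr
      rcases lt_or_ge r i with hlt | hge
      · obtain ⟨a1, a2, a3, a4⟩ := gen_low hB i r m (by omega) hlt h2 h3
        exact Commute.sub_right a1 a3
      · have hri : i + 2 ≤ r := by omega
        exact Commute.sub_right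
          (commute_sij (s i) s r m (by omega)
            (fun j hj1 hj2 => hB.ss_comm i j h1 (by omega) (by omega)))
          (commute_eij (s i) s e r m (by omega)
            (fun j hj1 hj2 => hB.ss_comm i j h1 (by omega) (by omega))
            (fun j hj1 hj2 => hB.se_comm i j h1 (by omega) (by omega)))
    · have A1 : s i * sij s i m = sij s (i+1) m * s i := by
        rw [E1, ← mul_assoc, ← mul_assoc, hss, one_mul]
      have A2 : s i * sij s (i+1) m = sij s i m * s i := by
        rw [E1, mul_assoc, mul_assoc, hss, mul_one]
      have A3 : s i * eij s e i m = eij s e (i+1) m * s i := by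
        rw [E2, ← mul_assoc, ← mul_assoc, hss, one_mul]
      have A4 : s i * eij s e (i+1) m = eij s e i m * s i := by
        rw [E2, mul_assoc, mul_assoc, hss, mul_one]
      show s i * _ = _ * s i
      simp only [mul_add, add_mul, mul_sub, sub_mul, A1, A2, A3, A4]
      abel
  · refine main (e i) ?_ ?_
    · intro r hr
      simp only [Finset.mem_erase, Finset.mem_Icc] at hr
      rcases lt_or_ge r i with hlt | hge
      · obtain ⟨a1, a2, a3, a4⟩ := gen_low hB i r m (by omega) hlt h2 h3
        exact Commute.sub_right a2 a4
      · have hri : i + 2 ≤ r := by omega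
        exact Commute.sub_right
          (commute_sij (e i) s r m (by omega)
            (fun j hj1 hj2 => (hB.es_comm i j h1 (by omega) (by omega)).symm))
          (commute_eij (e i) s e r m (by omega)
            (fun j hj1 hj2 => (hB.es_comm i j h1 (by omega) (by omega)).symm)
            (fun j hj1 hj2 => hB.ee_comm i j h1 (by omega) (by omega)))
    · have hes : e i * s i = e i := hB.es i h1 (by omega)
      have hse' : s i * e i = e i := hB.se i h1 (by omega)
      have P := lemP hB i m h1 h2 h3
      have P' := lemP' hB i m h1 h2 h3
      have B1 : e i * sij s i m = e i * eij s e (i+1) m := by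
        rw [E1, ← mul_assoc, ← mul_assoc, hes, P, mul_assoc, hss, mul_one]
      have B2 : e i * eij s e i m = e i * sij s (i+1) m := by
        rw [E2, ← mul_assoc, ← mul_assoc, hes, ← P]
      have C1 : sij s i m * e i = eij s e (i+1) m * e i := by
        rw [E1, mul_assoc, hse', mul_assoc, P', ← mul_assoc, ← mul_assoc, hss, one_mul]
      have C2 : eij s e i m * e i = sij s (i+1) m * e i := by
        rw [E2, mul_assoc, hse', ← P']
      have hz1 : e i * ((sij s (i+1) m - eij s e (i+1) m) + (sij s i m - eij s e i m)) = 0 := by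
        simp only [mul_add, mul_sub, B1, B2]
        abel
      have hz2 : ((sij s (i+1) m - eij s e (i+1) m) + (sij s i m - eij s e i m)) * e i = 0 := by
        simp only [add_mul, sub_mul, C1, C2]
        abel
      show e i * _ = _ * e i
      rw [hz1, hz2]

lemma jm_jm (hB : IsBrauer n ω s e) (r r' : ℕ) (h1 : 1 ≤ r) (h2 : r < r') (h3 : r' ≤ n) :
    Commute (jm ω s e r') (jm ω s e r) := by
  have hjm : jm ω s e r = algebraMap R A ((ω - 1)/2)
      + ∑ t ∈ Finset.Icc 1 (r-1), (sij s t r - eij s e t r) := rfl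
  rw [hjm]
  refine Commute.add_right ((Algebra.commutes _ _).symm) ?_
  refine Commute.sum_right _ _ _ (fun t ht => ?_)
  simp only [Finset.mem_Icc] at ht
  have hsub : ∀ j, t ≤ j → j < r → Commute (jm ω s e r') (s j) ∧ Commute (jm ω s e r') (e j) :=
    fun j hj1 hj2 => jm_gen hB r' j (by omega) (by omega) h3
  exact Commute.sub_right
    (commute_sij _ s t r (by omega) (fun j a b => (hsub j a b).1))
    (commute_eij _ s e t r (by omega) (fun j a b => (hsub j a b).1) (fun j a b => (hsub j a b).2))

end BrauerProof

/-- The Jucys–Murphy element `x_n` commutes with each of the generators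
`s_1,…,s_{n-2}`, `e_1,…,e_{n-2}` (hence with the whole subalgebra `B_{n-1}(ω)`), and
the elements `x_1,…,x_n` pairwise commute.  This is stated in any algebra over
`F = ℂ(ω)` whose elements `s i`, `e i` satisfy the Brauer relations. -/
theorem jm_commutes {A : Type*} [Ring A] [Algebra F A]
    (n : ℕ) (s e : ℕ → A) (hB : IsBrauer n ωF s e) :
    (∀ i, 1 ≤ i → i + 2 ≤ n →
      Commute (jm ωF s e n) (s i) ∧ Commute (jm ωF s e n) (e i)) ∧
    (∀ r r', 1 ≤ r → r ≤ n → 1 ≤ r' → r' ≤ n →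
      Commute (jm ωF s e r) (jm ωF s e r')) := by
  constructor
  · intro i hi1 hi2
    exact jm_gen hB n i hi1 hi2 le_rfl
  · intro r r' hr1 hrn hr'1 hr'n
    rcases lt_trichotomy r r' with h | h | h
    · exact (jm_jm hB r r' hr1 h hr'n).symm
    · subst h; exact Commute.refl _
    · exact jm_jm hB r' r hr'1 h hrn

end BrauerFusion
end
end
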